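/- arXiv:0809.4337 — 3 statements merged into one kernel-verified Lean document; each statement's English description precedes it below -/
import Mathlib

section
/- Let A = K[L][x_{v_k,w_k}^{−1}] and B = K[L'][x_{v_{k−1}+1,w_k},…,x_{v_k−1,w_k}, x_{v_k,w_k}, x_{v_k,w_k}^{−1}, x_{v_k,w_k−1},…,x_{v_k,w_{k+1}+1}] (so A and B are localizations at x_{v_k,w_k} of polynomial rings in the same set of variables). Define the K-algebra homomorphism φ: A → B by φ(x_{ij}) = x_{ij} + x_{i,w_k}·x_{v_k,j}·x_{v_k,w_k}^{−1} if i ≠ v_k, j ≠ w_k and (i,j) ∈ 𝓛⁺ with i ≤ v_k, j ≤ w_k, and φ(x_{ij}) = x_{ij} otherwise; and define ψ: B → A by ψ(x_{ij}) = x_{ij} − x_{i,w_k}·x_{v_k,j}·x_{v_k,w_k}^{−1} if i ≠ v_k, j ≠ w_k and (i,j) ∈ 𝓛'⁺ with i ≤ v_k − 1, j ≤ w_k − 1, and ψ(x_{ij}) = x_{ij} otherwise. Then φ and ψ are mutually inverse K-algebra isomorphisms. -/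
open MvPolynomial

/-- A symmetric ladder inside the `n × n` grid `{1,…,n} × {1,…,n}`. -/
def IsLadder (n : ℕ) (Λ : Set (ℕ × ℕ)) : Prop :=
  (∀ p ∈ Λ, 1 ≤ p.1 ∧ p.1 ≤ n ∧ 1 ≤ p.2 ∧ p.2 ≤ n) ∧
  (∀ p ∈ Λ, (p.2, p.1) ∈ Λ) ∧
  (∀ i j h k : ℕ, i < h → k < j → (i, j) ∈ Λ → (h, k) ∈ Λ →
    (i, k) ∈ Λ ∧ (i, h) ∈ Λ ∧ (h, j) ∈ Λ ∧ (j, k) ∈ Λ)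

/-- `𝓛⁺`, the part of the ladder on or above the diagonal. -/
def ladderPlus (Λ : Set (ℕ × ℕ)) : Set (ℕ × ℕ) := {p ∈ Λ | p.1 ≤ p.2}

/-- The variable of `MvPolynomial ↥σ K` attached to a position `p` (or `0` if `p ∉ σ`). -/
noncomputable def xvar (K : Type*) [Field K] (σ : Set (ℕ × ℕ)) (p : ℕ × ℕ) :
    MvPolynomial ↥σ K :=
  letI := Classical.dec (p ∈ σ)
  if h : p ∈ σ then X ⟨p, h⟩ else 0

/-- The `(i,j)` entry of the generic symmetric matrix, as an element of `K[L]`: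
the variable attached to the sorted pair. -/
noncomputable def ladderEntry (K : Type*) [Field K] (Λ : Set (ℕ × ℕ)) (i j : ℕ) :
    MvPolynomial ↥(ladderPlus Λ) K := xvar K (ladderPlus Λ) (min i j, max i j)

/-- `I_t(S)`: the ideal of `K[L]` generated by the `t × t` minors of the generic
symmetric matrix all of whose entries lie in the set of positions `S`
(positions are recorded as sorted pairs). -/
noncomputable def minorIdeal (K : Type*) [Field K] (Λ : Set (ℕ × ℕ)) (S : Set (ℕ × ℕ))
    (t : ℕ) : Ideal (MvPolynomial ↥(ladderPlus Λ) K) :=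
  Ideal.span { f | ∃ α β : Fin t → ℕ, StrictMono α ∧ StrictMono β ∧
    (∀ p q, (min (α p) (β q), max (α p) (β q)) ∈ S) ∧
    f = (Matrix.of fun p q => ladderEntry K Λ (α p) (β q)).det }

/-- The region `T⁺_{(c,d)} = {(i,j) ∈ T⁺ : i ≤ c, j ≤ d}` of a (symmetric) ladder `T`. -/
def region (T : Set (ℕ × ℕ)) (c d : ℕ) : Set (ℕ × ℕ) :=
  {p ∈ ladderPlus T | p.1 ≤ c ∧ p.2 ≤ d}

/-- The symmetric mixed ladder determinantal ideal
`I_t(L) = I_{t 1}(L_{(v 1, w 1)}) + … + I_{t s}(L_{(v s, w s)}) ⊆ K[L]`. -/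
noncomputable def mixedLadderIdeal (K : Type*) [Field K] (Λ : Set (ℕ × ℕ)) (s : ℕ)
    (v w t : ℕ → ℕ) : Ideal (MvPolynomial ↥(ladderPlus Λ) K) :=
  ∑ k ∈ Finset.Icc 1 s, minorIdeal K Λ (region Λ (v k) (w k)) (t k)

/-- The data of distinguished points `(v 1, w 1),…,(v s, w s)`: points of the upper
border of `𝓛⁺` containing all upper outside corners, with `v` increasing and `w`
decreasing. -/
def DistinguishedPoints (Λ : Set (ℕ × ℕ)) (s : ℕ) (v w : ℕ → ℕ) : Prop :=
  1 ≤ s ∧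
  (∀ k, 1 ≤ k → k ≤ s → (v k, w k) ∈ ladderPlus Λ ∧ (v k + 1, w k + 1) ∉ ladderPlus Λ) ∧
  (∀ c d : ℕ, (c, d) ∈ ladderPlus Λ → (c + 1, d + 1) ∉ ladderPlus Λ →
    (c + 1, d) ∉ Λ → (c, d + 1) ∉ Λ → ∃ k, 1 ≤ k ∧ k ≤ s ∧ v k = c ∧ w k = d) ∧
  (∀ k l, 1 ≤ k → k ≤ l → l ≤ s → v k ≤ v l ∧ w l ≤ w k)

/-- The entries removed from `𝓛` in the biliaison step at the distinguished point
`(v k, w k)`: the entries `(v (k-1) + 1, w k),…,(v k, w k),(v k, w k - 1),…,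
(v k, w (k+1) + 1)` together with their transposes. -/
def removedSet (v w : ℕ → ℕ) (k : ℕ) : Set (ℕ × ℕ) :=
  {p | (p.2 = w k ∧ v (k - 1) + 1 ≤ p.1 ∧ p.1 ≤ v k) ∨
       (p.1 = v k ∧ w (k + 1) + 1 ≤ p.2 ∧ p.2 ≤ w k) ∨
       (p.1 = w k ∧ v (k - 1) + 1 ≤ p.2 ∧ p.2 ≤ v k) ∨
       (p.2 = v k ∧ w (k + 1) + 1 ≤ p.1 ∧ p.1 ≤ w k)}

/-- The ladder `𝓛'` obtained from `𝓛` by removing the entries of `removedSet`. -/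
def ladderPrime (Λ : Set (ℕ × ℕ)) (v w : ℕ → ℕ) (k : ℕ) : Set (ℕ × ℕ) :=
  Λ \ removedSet v w k

/-- The ladder `𝓙` obtained from `𝓛` by removing the single entry `(v k, w k)`
and its transpose. -/
def ladderJ (Λ : Set (ℕ × ℕ)) (v w : ℕ → ℕ) (k : ℕ) : Set (ℕ × ℕ) :=
  Λ \ {(v k, w k), (w k, v k)}

/-- The ideal `I_{t'}(L')` of the ladder `𝓛'` with distinguished points
`(v 1, w 1),…,(v (k-1), w (k-1)),(v k - 1, w k - 1),(v (k+1), w (k+1)),…,(v s, w s)`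
and sizes `t' = (t 1,…,t (k-1), t k - 1, t (k+1),…,t s)`, extended to `K[L]`. -/
noncomputable def primedIdeal (K : Type*) [Field K] (Λ : Set (ℕ × ℕ)) (s : ℕ)
    (v w t : ℕ → ℕ) (k : ℕ) : Ideal (MvPolynomial ↥(ladderPlus Λ) K) :=
  (∑ l ∈ (Finset.Icc 1 s).erase k,
    minorIdeal K Λ (region (ladderPrime Λ v w k) (v l) (w l)) (t l)) +
  minorIdeal K Λ (region (ladderPrime Λ v w k) (v k - 1) (w k - 1)) (t k - 1)

/-- The ideal `I_{t'}(L')`, as an ideal of `K[L']`. -/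
noncomputable def primedIdealSelf (K : Type*) [Field K] (Λ : Set (ℕ × ℕ)) (s : ℕ)
    (v w t : ℕ → ℕ) (k : ℕ) :
    Ideal (MvPolynomial ↥(ladderPlus (ladderPrime Λ v w k)) K) :=
  (∑ l ∈ (Finset.Icc 1 s).erase k,
    minorIdeal K (ladderPrime Λ v w k)
      (region (ladderPrime Λ v w k) (v l) (w l)) (t l)) +
  minorIdeal K (ladderPrime Λ v w k)
    (region (ladderPrime Λ v w k) (v k - 1) (w k - 1)) (t k - 1)

/-- The ideal `I_u(J) = I_{t 1}(L_1)+…+I_{t (k-1)}(L_(k-1)) + I_{t k}(J_{(v k - 1, w k)})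
+ I_{t k}(J_{(v k, w k - 1)}) + I_{t (k+1)}(L_(k+1))+…+I_{t s}(L_s) ⊆ K[L]`,
generated by the minors generating `I_t(L)` that do not involve `x_{v k, w k}`. -/
noncomputable def linkIdeal (K : Type*) [Field K] (Λ : Set (ℕ × ℕ)) (s : ℕ)
    (v w t : ℕ → ℕ) (k : ℕ) : Ideal (MvPolynomial ↥(ladderPlus Λ) K) :=
  (∑ l ∈ (Finset.Icc 1 s).erase k,
    minorIdeal K Λ (region Λ (v l) (w l)) (t l)) +
  minorIdeal K Λ (region (ladderJ Λ v w k) (v k - 1) (w k)) (t k) +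
  minorIdeal K Λ (region (ladderJ Λ v w k) (v k) (w k - 1)) (t k)

/-- The variable of a polynomial ring (over any coefficient ring) attached to a
position `p`, or `0` if `p` is not an allowed position. -/
noncomputable def pvar (R : Type*) [CommRing R] (σ : Set (ℕ × ℕ)) (p : ℕ × ℕ) :
    MvPolynomial ↥σ R :=
  letI := Classical.dec (p ∈ σ)
  if h : p ∈ σ then MvPolynomial.X ⟨p, h⟩ else 0

section Aux

open MvPolynomial

variable {K : Type*} [Field K]

/-- The target values of the substitution homomorphisms, on variables. -/
noncomputable def auxF (K : Type*) [Field K] (Λ : Set (ℕ × ℕ)) (vk wk : ℕ)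
    (c : ℕ × ℕ → Prop) (z : Localization.Away (ladderEntry K Λ vk wk))
    (q : ↥(ladderPlus Λ)) : Localization.Away (ladderEntry K Λ vk wk) :=
  letI := Classical.dec (c q.1)
  if c q.1 then
    algebraMap (MvPolynomial ↥(ladderPlus Λ) K) _ (MvPolynomial.X q) +
      algebraMap (MvPolynomial ↥(ladderPlus Λ) K) _
        (ladderEntry K Λ q.1.1 wk * ladderEntry K Λ vk q.1.2) * z
  else algebraMap (MvPolynomial ↥(ladderPlus Λ) K) _ (MvPolynomial.X q)

theorem auxF_apply (Λ : Set (ℕ × ℕ)) (vk wk : ℕ) (c : ℕ × ℕ → Prop)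
    (z : Localization.Away (ladderEntry K Λ vk wk)) (p : ℕ × ℕ) (hp : p ∈ ladderPlus Λ) :
    auxF K Λ vk wk c z ⟨p, hp⟩ =
      letI := Classical.dec (c p)
      if c p then
        algebraMap (MvPolynomial ↥(ladderPlus Λ) K) _ (MvPolynomial.X ⟨p, hp⟩) +
          algebraMap (MvPolynomial ↥(ladderPlus Λ) K) _
            (ladderEntry K Λ p.1 wk * ladderEntry K Λ vk p.2) * z
      else algebraMap (MvPolynomial ↥(ladderPlus Λ) K) _ (MvPolynomial.X ⟨p, hp⟩) := by
  simp only [auxF]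

end Aux

open scoped Classical in
theorem statement4 {K : Type*} [Field K] [IsAlgClosed K] (n : ℕ) (hn : 1 ≤ n)
    (Λ : Set (ℕ × ℕ)) (hΛ : IsLadder n Λ)
    (s : ℕ) (v w t : ℕ → ℕ) (hd : DistinguishedPoints Λ s v w)
    (ht : ∀ l, 1 ≤ l → l ≤ s → 1 ≤ t l)
    (hv0 : v 0 = 0) (hws : w (s + 1) = 0)
    (k : ℕ) (hk1 : 1 ≤ k) (hks : k ≤ s)
    (htk : 2 ≤ t k) (hvk : v (k - 1) < v k) (hwk : w (k + 1) < w k) :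
    ∃ (φ ψ : Localization.Away (ladderEntry K Λ (v k) (w k)) →ₐ[K]
        Localization.Away (ladderEntry K Λ (v k) (w k))),
      (∀ (p : ℕ × ℕ) (hp : p ∈ ladderPlus Λ),
        φ (algebraMap (MvPolynomial ↥(ladderPlus Λ) K) _ (MvPolynomial.X ⟨p, hp⟩)) =
          if p.1 ≠ v k ∧ p.2 ≠ w k ∧ p.1 ≤ v k ∧ p.2 ≤ w k then
            algebraMap (MvPolynomial ↥(ladderPlus Λ) K) _ (MvPolynomial.X ⟨p, hp⟩) +
              algebraMap (MvPolynomial ↥(ladderPlus Λ) K) _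
                  (ladderEntry K Λ p.1 (w k) * ladderEntry K Λ (v k) p.2) *
                IsLocalization.Away.invSelf (ladderEntry K Λ (v k) (w k))
          else
            algebraMap (MvPolynomial ↥(ladderPlus Λ) K) _ (MvPolynomial.X ⟨p, hp⟩)) ∧
      (∀ (p : ℕ × ℕ) (hp : p ∈ ladderPlus Λ),
        ψ (algebraMap (MvPolynomial ↥(ladderPlus Λ) K) _ (MvPolynomial.X ⟨p, hp⟩)) =
          if p.1 ≠ v k ∧ p.2 ≠ w k ∧ p ∈ ladderPlus (ladderPrime Λ v w k) ∧
              p.1 ≤ v k - 1 ∧ p.2 ≤ w k - 1 then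
            algebraMap (MvPolynomial ↥(ladderPlus Λ) K) _ (MvPolynomial.X ⟨p, hp⟩) -
              algebraMap (MvPolynomial ↥(ladderPlus Λ) K) _
                  (ladderEntry K Λ p.1 (w k) * ladderEntry K Λ (v k) p.2) *
                IsLocalization.Away.invSelf (ladderEntry K Λ (v k) (w k))
          else
            algebraMap (MvPolynomial ↥(ladderPlus Λ) K) _ (MvPolynomial.X ⟨p, hp⟩)) ∧
      ψ.comp φ = AlgHom.id K _ ∧ φ.comp ψ = AlgHom.id K _ := by
  
  classical
  obtain ⟨hs, hdp, hcorner, hmono⟩ := hd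
  have hvwk : (v k, w k) ∈ ladderPlus Λ := (hdp k hk1 hks).1
  have hvwle : v k ≤ w k := hvwk.2
  -- Key combinatorial fact: `v k = w k`.
  have hm : w k = v k := by
    by_contra hne
    have hlt : v k < w k := lt_of_le_of_ne hvwle fun h => hne h.symm
    have hΛvw : (v k, w k) ∈ Λ := hvwk.1
    have hΛwv : (w k, v k) ∈ Λ := hΛ.2.1 _ hΛvw
    have hww : (w k, w k) ∈ Λ :=
      (hΛ.2.2 (v k) (w k) (w k) (v k) hlt hlt hΛvw hΛwv).2.2.1
    have hwn : w k ≤ n := (hΛ.1 _ hww).2.1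
    set P : ℕ → Prop := fun c => (c, c) ∈ Λ with hP
    set c := Nat.findGreatest P n with hc
    have hPc : P c := Nat.findGreatest_spec hwn hww
    have hwc : w k ≤ c := Nat.le_findGreatest hwn hww
    have hsucc : (c + 1, c + 1) ∉ Λ := by
      intro h
      exact Nat.findGreatest_is_greatest (lt_add_one c) ((hΛ.1 _ h).2.1) h
    have h10 : (c + 1, c) ∉ Λ := by
      intro h
      have h01 : (c, c + 1) ∈ Λ := hΛ.2.1 _ h
      exact hsucc (hΛ.2.2 c (c + 1) (c + 1) c (lt_add_one c) (lt_add_one c) h01 h).2.2.1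
    have h01 : (c, c + 1) ∉ Λ := fun h => h10 (hΛ.2.1 _ h)
    obtain ⟨l, hl1, hls, hvl, hwl⟩ :=
      hcorner c c ⟨hPc, le_rfl⟩ (fun h => hsucc h.1) h10 h01
    rcases le_or_gt l k with h | h
    · have := (hmono l k hl1 h hks).1
      omega
    · have := (hmono (k + 1) l (by omega) h hls).2
      omega
  -- Notation
  set R := MvPolynomial ↥(ladderPlus Λ) K with hR
  set d : R := ladderEntry K Λ (v k) (w k) with hd0
  set S := Localization.Away d with hS
  have hdX : d = MvPolynomial.X (⟨(v k, w k), hvwk⟩ : ↥(ladderPlus Λ)) := by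
    rw [hd0, ladderEntry, min_eq_left hvwle, max_eq_right hvwle, xvar, dif_pos hvwk]
  -- The two conditions
  set Cφ : ℕ × ℕ → Prop := fun p => p.1 ≠ v k ∧ p.2 ≠ w k ∧ p.1 ≤ v k ∧ p.2 ≤ w k with hCφ
  set Cψ : ℕ × ℕ → Prop := fun p => p.1 ≠ v k ∧ p.2 ≠ w k ∧
      p ∈ ladderPlus (ladderPrime Λ v w k) ∧ p.1 ≤ v k - 1 ∧ p.2 ≤ w k - 1 with hCψ
  have hcc : ∀ p : ℕ × ℕ, p ∈ ladderPlus Λ → (Cφ p ↔ Cψ p) := by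
    intro p hp
    constructor
    · rintro ⟨h1, h2, h3, h4⟩
      have hp1 : p.1 < v k := lt_of_le_of_ne h3 h1
      have hp2 : p.2 < w k := lt_of_le_of_ne h4 h2
      refine ⟨h1, h2, ⟨⟨hp.1, ?_⟩, hp.2⟩, by omega, by omega⟩
      intro hr
      simp only [removedSet, Set.mem_setOf_eq] at hr
      omega
    · rintro ⟨h1, h2, _, h4, h5⟩
      exact ⟨h1, h2, by omega, by omega⟩
  -- entries of the correction terms
  have entry_col : ∀ a : ℕ, a ≤ w k →
      ladderEntry K Λ a (w k) = xvar K (ladderPlus Λ) (a, w k) := by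
    intro a ha
    rw [ladderEntry, min_eq_left ha, max_eq_right ha]
  have entry_row : ∀ b : ℕ, b ≤ w k →
      ladderEntry K Λ (v k) b = xvar K (ladderPlus Λ) (b, w k) := by
    intro b hb
    rw [ladderEntry, ← hm, min_eq_right hb, max_eq_left hb]
  -- the localization inverse
  set I : S := IsLocalization.Away.invSelf d with hI
  have hdu : IsUnit (algebraMap R S d) :=
    IsUnit.of_mul_eq_one I (IsLocalization.Away.mul_invSelf d)
  -- the two substitution targets
  set Fφ : ↥(ladderPlus Λ) → S := auxF K Λ (v k) (w k) Cφ I with hFφ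
  set Fψ : ↥(ladderPlus Λ) → S := auxF K Λ (v k) (w k) Cψ (-I) with hFψ
  -- units
  have hCφvw : ¬ Cφ (v k, w k) := fun h => h.1 rfl
  have hCψvw : ¬ Cψ (v k, w k) := fun h => h.1 rfl
  have hφd : MvPolynomial.aeval Fφ d = algebraMap R S d := by
    have h0 : MvPolynomial.aeval Fφ
        (MvPolynomial.X (⟨(v k, w k), hvwk⟩ : ↥(ladderPlus Λ)) : R) =
        algebraMap R S (MvPolynomial.X ⟨(v k, w k), hvwk⟩) := by
      rw [MvPolynomial.aeval_X, hFφ, auxF_apply, if_neg hCφvw]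
    rw [← hdX] at h0
    exact h0
  have hψd : MvPolynomial.aeval Fψ d = algebraMap R S d := by
    have h0 : MvPolynomial.aeval Fψ
        (MvPolynomial.X (⟨(v k, w k), hvwk⟩ : ↥(ladderPlus Λ)) : R) =
        algebraMap R S (MvPolynomial.X ⟨(v k, w k), hvwk⟩) := by
      rw [MvPolynomial.aeval_X, hFψ, auxF_apply, if_neg hCψvw]
    rw [← hdX] at h0
    exact h0
  have huφ : ∀ y : Submonoid.powers d, IsUnit (MvPolynomial.aeval Fφ (y : R)) := by
    rintro ⟨y, i, rfl⟩
    simpa only [map_pow, hφd] using hdu.pow i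
  have huψ : ∀ y : Submonoid.powers d, IsUnit (MvPolynomial.aeval Fψ (y : R)) := by
    rintro ⟨y, i, rfl⟩
    simpa only [map_pow, hψd] using hdu.pow i
  set φ : S →ₐ[K] S := IsLocalization.liftAlgHom (S := S) huφ with hφdef
  set ψ : S →ₐ[K] S := IsLocalization.liftAlgHom (S := S) huψ with hψdef
  have hφX : ∀ (p : ℕ × ℕ) (hp : p ∈ ladderPlus Λ),
      φ (algebraMap R S (MvPolynomial.X ⟨p, hp⟩)) = Fφ ⟨p, hp⟩ := by
    intro p hp
    rw [hφdef, IsLocalization.liftAlgHom_apply, IsLocalization.lift_eq]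
    show MvPolynomial.aeval Fφ (MvPolynomial.X ⟨p, hp⟩) = Fφ ⟨p, hp⟩
    rw [MvPolynomial.aeval_X]
  have hψX : ∀ (p : ℕ × ℕ) (hp : p ∈ ladderPlus Λ),
      ψ (algebraMap R S (MvPolynomial.X ⟨p, hp⟩)) = Fψ ⟨p, hp⟩ := by
    intro p hp
    rw [hψdef, IsLocalization.liftAlgHom_apply, IsLocalization.lift_eq]
    show MvPolynomial.aeval Fψ (MvPolynomial.X ⟨p, hp⟩) = Fψ ⟨p, hp⟩
    rw [MvPolynomial.aeval_X]
  -- the stated descriptions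
  have hφ : ∀ (p : ℕ × ℕ) (hp : p ∈ ladderPlus Λ),
      φ (algebraMap R S (MvPolynomial.X ⟨p, hp⟩)) =
        if Cφ p then
          algebraMap R S (MvPolynomial.X ⟨p, hp⟩) +
            algebraMap R S (ladderEntry K Λ p.1 (w k) * ladderEntry K Λ (v k) p.2) * I
        else algebraMap R S (MvPolynomial.X ⟨p, hp⟩) := by
    intro p hp
    rw [hφX p hp, hFφ, auxF_apply]
    split_ifs <;> rfl
  have hψ : ∀ (p : ℕ × ℕ) (hp : p ∈ ladderPlus Λ),
      ψ (algebraMap R S (MvPolynomial.X ⟨p, hp⟩)) =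
        if Cψ p then
          algebraMap R S (MvPolynomial.X ⟨p, hp⟩) -
            algebraMap R S (ladderEntry K Λ p.1 (w k) * ladderEntry K Λ (v k) p.2) * I
        else algebraMap R S (MvPolynomial.X ⟨p, hp⟩) := by
    intro p hp
    rw [hψX p hp, hFψ, auxF_apply]
    split_ifs with h
    · ring
    · rfl
  -- φ and ψ fix the variables in column `w k`
  have hfix : ∀ (χ : S →ₐ[K] S), (∀ (p : ℕ × ℕ) (hp : p ∈ ladderPlus Λ), p.2 = w k →
      χ (algebraMap R S (MvPolynomial.X ⟨p, hp⟩)) = algebraMap R S (MvPolynomial.X ⟨p, hp⟩)) →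
      ∀ a : ℕ, χ (algebraMap R S (xvar K (ladderPlus Λ) (a, w k))) =
        algebraMap R S (xvar K (ladderPlus Λ) (a, w k)) := by
    intro χ hχ a
    rw [xvar]
    split_ifs with h
    · exact hχ (a, w k) h rfl
    · simp
  have hφcol : ∀ (p : ℕ × ℕ) (hp : p ∈ ladderPlus Λ), p.2 = w k →
      φ (algebraMap R S (MvPolynomial.X ⟨p, hp⟩)) = algebraMap R S (MvPolynomial.X ⟨p, hp⟩) := by
    intro p hp h2
    rw [hφ p hp, if_neg fun h => h.2.1 h2]
  have hψcol : ∀ (p : ℕ × ℕ) (hp : p ∈ ladderPlus Λ), p.2 = w k →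
      ψ (algebraMap R S (MvPolynomial.X ⟨p, hp⟩)) = algebraMap R S (MvPolynomial.X ⟨p, hp⟩) := by
    intro p hp h2
    rw [hψ p hp, if_neg fun h => h.2.1 h2]
  -- φ and ψ fix the correction terms
  have hfixe : ∀ (χ : S →ₐ[K] S), (∀ a : ℕ, χ (algebraMap R S (xvar K (ladderPlus Λ) (a, w k))) =
      algebraMap R S (xvar K (ladderPlus Λ) (a, w k))) →
      ∀ p : ℕ × ℕ, Cφ p →
      χ (algebraMap R S (ladderEntry K Λ p.1 (w k) * ladderEntry K Λ (v k) p.2)) =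
        algebraMap R S (ladderEntry K Λ p.1 (w k) * ladderEntry K Λ (v k) p.2) := by
    intro χ hχ p hcp
    rw [entry_col p.1 (by omega), entry_row p.2 hcp.2.2.2, map_mul, map_mul, hχ, hχ]
  -- φ and ψ fix the inverse
  have hfixI : ∀ (χ : S →ₐ[K] S),
      χ (algebraMap R S d) = algebraMap R S d → χ I = I := by
    intro χ hχd
    have h1 : χ I * algebraMap R S d = 1 := by
      rw [← hχd, ← map_mul, mul_comm, IsLocalization.Away.mul_invSelf, map_one]
    have h2 : I * algebraMap R S d = 1 := by
      rw [mul_comm]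
      exact IsLocalization.Away.mul_invSelf d
    exact hdu.mul_right_cancel (h1.trans h2.symm)
  have hφdfix : φ (algebraMap R S d) = algebraMap R S d := by
    have h0 := hφcol (v k, w k) hvwk rfl
    rw [← hdX] at h0
    exact h0
  have hψdfix : ψ (algebraMap R S d) = algebraMap R S d := by
    have h0 := hψcol (v k, w k) hvwk rfl
    rw [← hdX] at h0
    exact h0
  have hφI : φ I = I := hfixI φ hφdfix
  have hψI : ψ I = I := hfixI ψ hψdfix
  have hφe := hfixe φ (hfix φ hφcol)
  have hψe := hfixe ψ (hfix ψ hψcol)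
  -- compositions
  have comp1 : ψ.comp φ = AlgHom.id K S := by
    have h2 : (ψ.toRingHom.comp φ.toRingHom).comp (algebraMap R S) =
        (RingHom.id S).comp (algebraMap R S) := by
      apply MvPolynomial.ringHom_ext
      · intro a
        simp only [RingHom.coe_comp, Function.comp_apply, RingHom.id_apply,
          AlgHom.toRingHom_eq_coe, RingHom.coe_coe]
        rw [← MvPolynomial.algebraMap_eq, ← IsScalarTower.algebraMap_apply,
          AlgHom.commutes, AlgHom.commutes]
      · rintro ⟨p, hp⟩
        simp only [RingHom.coe_comp, Function.comp_apply, RingHom.id_apply,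
          AlgHom.toRingHom_eq_coe, RingHom.coe_coe]
        by_cases hcp : Cφ p
        · have hcp' : Cψ p := (hcc p hp).1 hcp
          rw [hφ p hp, if_pos hcp, map_add, map_mul, hψ p hp, if_pos hcp', hψe p hcp, hψI]
          ring
        · have hcp' : ¬ Cψ p := fun h => hcp ((hcc p hp).2 h)
          rw [hφ p hp, if_neg hcp, hψ p hp, if_neg hcp']
    have h3 : ψ.toRingHom.comp φ.toRingHom = RingHom.id S :=
      IsLocalization.ringHom_ext (Submonoid.powers d) h2
    apply AlgHom.ext
    intro x
    exact RingHom.congr_fun h3 x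
  have comp2 : φ.comp ψ = AlgHom.id K S := by
    have h2 : (φ.toRingHom.comp ψ.toRingHom).comp (algebraMap R S) =
        (RingHom.id S).comp (algebraMap R S) := by
      apply MvPolynomial.ringHom_ext
      · intro a
        simp only [RingHom.coe_comp, Function.comp_apply, RingHom.id_apply,
          AlgHom.toRingHom_eq_coe, RingHom.coe_coe]
        rw [← MvPolynomial.algebraMap_eq, ← IsScalarTower.algebraMap_apply,
          AlgHom.commutes, AlgHom.commutes]
      · rintro ⟨p, hp⟩
        simp only [RingHom.coe_comp, Function.comp_apply, RingHom.id_apply,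
          AlgHom.toRingHom_eq_coe, RingHom.coe_coe]
        by_cases hcp' : Cψ p
        · have hcp : Cφ p := (hcc p hp).2 hcp'
          rw [hψ p hp, if_pos hcp', map_sub, map_mul, hφ p hp, if_pos hcp, hφe p hcp, hφI]
          ring
        · have hcp : ¬ Cφ p := fun h => hcp' ((hcc p hp).1 h)
          rw [hψ p hp, if_neg hcp', hφ p hp, if_neg hcp]
    have h3 : φ.toRingHom.comp ψ.toRingHom = RingHom.id S :=
      IsLocalization.ringHom_ext (Submonoid.powers d) h2
    apply AlgHom.ext
    intro x
    exact RingHom.congr_fun h3 x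
  exact ⟨φ, ψ, hφ, hψ, comp1, comp2⟩
end

section
/- Let 2 ≤ k ≤ s. If v_k − v_{k−1} ≤ t_k − t_{k−1}, then I_{t_k}(L_k) ⊆ I_{t_{k−1}}(L_{k−1}): every t_k×t_k minor of X with entries in L_k is a K[L]-linear combination of minors of size at least t_{k−1} with entries in L_{k−1} (obtained by Laplace expansion along the rows of index greater than v_{k−1}). -/
open MvPolynomial

lemma ladderEntry_symm (K : Type*) [Field K] (Λ : Set (ℕ × ℕ)) (i j : ℕ) :
    ladderEntry K Λ i j = ladderEntry K Λ j i := by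
  unfold ladderEntry
  rw [min_comm, max_comm]

/-- Lemma A: any `r × r` minor with entries in `S`, `t ≤ r`, lies in `minorIdeal K Λ S t`. -/
lemma det_mem_minorIdeal (K : Type*) [Field K] (Λ : Set (ℕ × ℕ)) (S : Set (ℕ × ℕ)) (t : ℕ) :
    ∀ r, t ≤ r → ∀ α β : Fin r → ℕ, StrictMono α → StrictMono β →
    (∀ p q, (min (α p) (β q), max (α p) (β q)) ∈ S) →
    (Matrix.of fun p q => ladderEntry K Λ (α p) (β q)).det ∈ minorIdeal K Λ S t := by
  intro r
  induction r with
  | zero =>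
    intro htr α β hα hβ hS
    have ht0 : t = 0 := Nat.le_zero.mp htr
    subst ht0
    exact Ideal.subset_span ⟨α, β, hα, hβ, hS, rfl⟩
  | succ m ih =>
    intro htr α β hα hβ hS
    rcases eq_or_lt_of_le htr with heq | hlt
    · subst heq
      exact Ideal.subset_span ⟨α, β, hα, hβ, hS, rfl⟩
    · rw [Matrix.det_succ_row_zero]
      refine Ideal.sum_mem _ fun j _ => ?_
      have hsub : (Matrix.of fun p q => ladderEntry K Λ (α p) (β q)).submatrix
          Fin.succ j.succAbove =
          Matrix.of fun p q => ladderEntry K Λ (α (Fin.succ p)) (β (j.succAbove q)) := rfl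
      rw [hsub]
      exact Ideal.mul_mem_left _ _
        (ih (Nat.lt_succ_iff.mp hlt) _ _ (hα.comp Fin.strictMono_succ)
          (hβ.comp (Fin.strictMono_succAbove j)) fun p q => hS _ _)

/-- Lemma B: an `r × r` minor whose entries lie in `𝓛⁺` with column bound `w'`, with at
most `b` rows of index `> v'` and `t' + b ≤ r`, lies in `I_{t'}(region Λ v' w')`. -/
lemma det_mem_region (K : Type*) [Field K] (Λ : Set (ℕ × ℕ)) (v' w' t' : ℕ) :
    ∀ b r, t' + b ≤ r → ∀ α β : Fin r → ℕ, StrictMono α → StrictMono β →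
    (∀ p q, (min (α p) (β q), max (α p) (β q)) ∈ ladderPlus Λ ∧ max (α p) (β q) ≤ w') →
    (Finset.univ.filter fun p => v' < α p).card ≤ b →
    (Matrix.of fun p q => ladderEntry K Λ (α p) (β q)).det ∈
      minorIdeal K Λ (region Λ v' w') t' := by
  intro b
  induction b with
  | zero =>
    intro r htr α β hα hβ hS hcard
    have hall : ∀ p, α p ≤ v' := by
      intro p
      by_contra hp
      have : p ∈ Finset.univ.filter fun p => v' < α p := by
        simp [Nat.lt_of_not_le fun h => hp h]
      have := Finset.card_pos.mpr ⟨p, this⟩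
      omega
    refine det_mem_minorIdeal K Λ _ t' r (by omega) α β hα hβ fun p q => ?_
    exact ⟨(hS p q).1, le_trans (min_le_left _ _) (hall p), (hS p q).2⟩
  | succ b ih =>
    intro r htr α β hα hβ hS hcard
    by_cases hb : (Finset.univ.filter fun p => v' < α p).card ≤ b
    · exact ih r (by omega) α β hα hβ hS hb
    · have hcard' : (Finset.univ.filter fun p => v' < α p).card = b + 1 := by omega
      -- there is a bad row, and then the last row is bad
      obtain ⟨p0, hp0⟩ : ∃ p, p ∈ Finset.univ.filter fun p => v' < α p := by
        refine Finset.card_pos.mp ?_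
        omega
      -- r must be positive
      have hr : 0 < r := Fin.pos_iff_nonempty.mpr ⟨p0⟩
      obtain ⟨m, rfl⟩ : ∃ m, r = m + 1 := ⟨r - 1, by omega⟩
      have hlastbad : v' < α (Fin.last m) := by
        have hp0' : v' < α p0 := by simpa using hp0
        exact lt_of_lt_of_le hp0' (hα.monotone (Fin.le_last p0))
      rw [Matrix.det_succ_row _ (Fin.last m)]
      refine Ideal.sum_mem _ fun j _ => ?_
      have hsub : (Matrix.of fun p q => ladderEntry K Λ (α p) (β q)).submatrix
          (Fin.last m).succAbove j.succAbove =
          Matrix.of fun p q =>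
            ladderEntry K Λ (α ((Fin.last m).succAbove p)) (β (j.succAbove q)) := rfl
      rw [hsub]
      refine Ideal.mul_mem_left _ _ (ih m (by omega) _ _
        (hα.comp (Fin.strictMono_succAbove _)) (hβ.comp (Fin.strictMono_succAbove j))
        (fun p q => hS _ _) ?_)
      -- count the bad rows of the submatrix
      have hinj : Set.InjOn (Fin.last m).succAbove
          ↑(Finset.univ.filter fun p => v' < α ((Fin.last m).succAbove p)) :=
        fun a _ c _ h => (Fin.succAbove_right_injective) h
      have hmaps : ∀ p ∈ Finset.univ.filter fun p => v' < α ((Fin.last m).succAbove p),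
          (Fin.last m).succAbove p ∈
            (Finset.univ.filter fun p => v' < α p).erase (Fin.last m) := by
        intro p hp
        simp only [Finset.mem_filter, Finset.mem_univ, true_and] at hp
        refine Finset.mem_erase.mpr ⟨Fin.succAbove_ne _ _, ?_⟩
        simpa [Fin.succAbove_last] using hp
      have := Finset.card_le_card_of_injOn _ hmaps hinj
      have herase : ((Finset.univ.filter fun p => v' < α p).erase (Fin.last m)).card = b := by
        rw [Finset.card_erase_of_mem (by simp [hlastbad]), hcard']
        omega
      omega

theorem statement6 {K : Type*} [Field K] [IsAlgClosed K] (n : ℕ) (hn : 1 ≤ n)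
    (Λ : Set (ℕ × ℕ)) (hΛ : IsLadder n Λ)
    (s : ℕ) (v w t : ℕ → ℕ) (hd : DistinguishedPoints Λ s v w)
    (ht : ∀ l, 1 ≤ l → l ≤ s → 1 ≤ t l)
    (k : ℕ) (hk2 : 2 ≤ k) (hks : k ≤ s)
    (hvt : (v k : ℤ) - v (k - 1) ≤ (t k : ℤ) - t (k - 1)) :
    minorIdeal K Λ (region Λ (v k) (w k)) (t k) ≤
      minorIdeal K Λ (region Λ (v (k - 1)) (w (k - 1))) (t (k - 1)) := by
  obtain ⟨-, -, -, hmono⟩ := hd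
  obtain ⟨hvle, hwle⟩ := hmono (k - 1) k (by omega) (by omega) hks
  rw [minorIdeal, Ideal.span_le]
  rintro f ⟨α, β, hα, hβ, hS, rfl⟩
  have hS' : ∀ p q, (min (α p) (β q), max (α p) (β q)) ∈ ladderPlus Λ ∧
      max (α p) (β q) ≤ w (k - 1) := fun p q =>
    ⟨(hS p q).1, le_trans (hS p q).2.2 hwle⟩
  have hmin : ∀ p q, min (α p) (β q) ≤ v k := fun p q => (hS p q).2.1
  have hb : ∀ γ : Fin (t k) → ℕ, (∀ p, γ p ≤ v k) → StrictMono γ →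
      (Finset.univ.filter fun p => v (k - 1) < γ p).card ≤ v k - v (k - 1) := by
    intro γ hγle hγ
    have : (Finset.univ.filter fun p => v (k - 1) < γ p).card ≤
        (Finset.Ioc (v (k - 1)) (v k)).card := by
      refine Finset.card_le_card_of_injOn γ ?_ fun a _ c _ h => hγ.injective h
      intro p hp
      simp only [Finset.mem_coe, Finset.mem_filter, Finset.mem_univ, true_and] at hp
      exact Finset.mem_Ioc.mpr ⟨hp, hγle p⟩
    simpa [Nat.card_Ioc] using this
  have hkey : t (k - 1) + (v k - v (k - 1)) ≤ t k := by omega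
  by_cases hall : ∀ p, α p ≤ v k
  · exact det_mem_region K Λ _ _ _ (v k - v (k - 1)) (t k) hkey α β hα hβ hS'
      (hb α hall hα)
  · push_neg at hall
    obtain ⟨p0, hp0⟩ := hall
    have hβle : ∀ q, β q ≤ v k := by
      intro q
      have := hmin p0 q
      rcases min_choice (α p0) (β q) with h | h <;> omega
    have hdet : (Matrix.of fun p q => ladderEntry K Λ (α p) (β q)).det =
        (Matrix.of fun q p => ladderEntry K Λ (β q) (α p)).det := by
      rw [← Matrix.det_transpose]
      congr 1
      ext q p
      simp [Matrix.transpose_apply, ladderEntry_symm]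
    rw [hdet]
    exact det_mem_region K Λ _ _ _ (v k - v (k - 1)) (t k) hkey β α hβ hα
      (fun q p => by rw [min_comm, max_comm]; exact hS' p q) (hb β hβle hβ)
end

section
/- Let 2 ≤ k ≤ s. If w_{k−1} − w_k ≤ t_{k−1} − t_k (equivalently w_k − w_{k−1} ≥ t_k − t_{k−1}), then I_{t_{k−1}}(L_{k−1}) ⊆ I_{t_k}(L_k): every t_{k−1}×t_{k−1} minor of X with entries in L_{k−1} is a K[L]-linear combination of minors of size at least t_k with entries in L_k (obtained by Laplace expansion along the columns of index greater than w_k). -/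
open MvPolynomial

section statement7aux

variable {K : Type*} [Field K]

private lemma finGap {T : ℕ} (f : Fin T → ℕ) (hf : StrictMono f) :
    ∀ (m : ℕ) (i j : Fin T), (j : ℕ) = (i : ℕ) + m → f i + m ≤ f j := by
  intro m
  induction m with
  | zero =>
    intro i j h
    have : i = j := Fin.ext (by omega)
    simp [this]
  | succ m ih =>
    intro i j h
    have hj : (i : ℕ) + m < T := by have := j.isLt; omega
    have h1 := ih i ⟨(i : ℕ) + m, hj⟩ rfl
    have h2 : f ⟨(i : ℕ) + m, hj⟩ < f j := hf (by simp [Fin.lt_def]; omega)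
    omega

private lemma countBound {T t₀ d' d : ℕ} (f : Fin T → ℕ) (hf : StrictMono f)
    (hub : ∀ q, f q ≤ d')
    (hT : (d' : ℤ) - d ≤ (T : ℤ) - t₀) :
    ∀ q : Fin T, (q : ℕ) < t₀ → f q ≤ d := by
  intro q hq
  by_contra hgt
  push_neg at hgt
  have hT1 : 1 ≤ T := by have := q.isLt; omega
  have hgap := finGap f hf ((T - 1) - (q : ℕ)) q ⟨T - 1, by omega⟩ (by simp; omega)
  have hlast := hub ⟨T - 1, by omega⟩
  omega

private lemma auxMem (Λ : Set (ℕ × ℕ)) (c d t₀ : ℕ)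
    (hcd : c ≤ d) (ht₀ : 1 ≤ t₀) :
    ∀ T, t₀ ≤ T → ∀ α β : Fin T → ℕ, StrictMono α → StrictMono β →
      (∀ p q, (min (α p) (β q), max (α p) (β q)) ∈ ladderPlus Λ) →
      (∀ p, α p ≤ c) → (∀ q : Fin T, (q : ℕ) < t₀ → β q ≤ d) →
      (Matrix.of fun p q => ladderEntry K Λ (α p) (β q)).det ∈
        minorIdeal K Λ (region Λ c d) t₀ := by
  intro T hT
  induction T, hT using Nat.le_induction with
  | base =>
    intro α β hα hβ hlp hαc hβd
    apply Ideal.subset_span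
    refine ⟨α, β, hα, hβ, fun p q => ⟨hlp p q, ?_, ?_⟩, rfl⟩
    · exact le_trans (min_le_left _ _) (hαc p)
    · exact max_le (le_trans (hαc p) hcd) (hβd q q.isLt)
  | succ T hT ih =>
    intro α β hα hβ hlp hαc hβd
    rw [Matrix.det_succ_column _ (Fin.last T)]
    apply Ideal.sum_mem
    intro i _
    apply Ideal.mul_mem_left
    have hsub : ((Matrix.of fun p q => ladderEntry K Λ (α p) (β q)).submatrix
        i.succAbove (Fin.last T).succAbove) =
        Matrix.of fun p q => ladderEntry K Λ ((α ∘ i.succAbove) p)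
          ((β ∘ Fin.castSucc) q) := by
      ext p q
      simp [Fin.succAbove_last]
    rw [hsub]
    exact ih (α ∘ i.succAbove) (β ∘ Fin.castSucc)
      (hα.comp (Fin.strictMono_succAbove i)) (hβ.comp Fin.strictMono_castSucc)
      (fun p q => hlp _ _) (fun p => hαc _)
      (fun q hq => hβd q.castSucc (by simpa using hq))

end statement7aux

theorem statement7 {K : Type*} [Field K] [IsAlgClosed K] (n : ℕ) (hn : 1 ≤ n)
    (Λ : Set (ℕ × ℕ)) (hΛ : IsLadder n Λ)
    (s : ℕ) (v w t : ℕ → ℕ) (hd : DistinguishedPoints Λ s v w)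
    (ht : ∀ l, 1 ≤ l → l ≤ s → 1 ≤ t l)
    (k : ℕ) (hk2 : 2 ≤ k) (hks : k ≤ s)
    (hwt : (w (k - 1) : ℤ) - w k ≤ (t (k - 1) : ℤ) - t k) :
    minorIdeal K Λ (region Λ (v (k - 1)) (w (k - 1))) (t (k - 1)) ≤
      minorIdeal K Λ (region Λ (v k) (w k)) (t k) := by
  
  obtain ⟨hs1, hpts, hcorners, hmono⟩ := hd
  have hk1 : 1 ≤ k - 1 := by omega
  have hk1s : k - 1 ≤ s := by omega
  obtain ⟨hv, hw⟩ := hmono (k - 1) k hk1 (by omega) hks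
  have hvwk : (v k, w k) ∈ ladderPlus Λ := (hpts k (by omega) hks).1
  have hvk_wk : v k ≤ w k := hvwk.2
  have htk : 1 ≤ t k := ht k (by omega) hks
  have htk1 : 1 ≤ t (k - 1) := ht (k - 1) hk1 hk1s
  have htkle : t k ≤ t (k - 1) := by omega
  rw [minorIdeal, Ideal.span_le]
  rintro f ⟨α, β, hα, hβ, hcond, rfl⟩
  have hlp : ∀ p q, (min (α p) (β q), max (α p) (β q)) ∈ ladderPlus Λ :=
    fun p q => (hcond p q).1
  have hmin : ∀ p q, min (α p) (β q) ≤ v (k - 1) := fun p q => (hcond p q).2.1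
  have hmax : ∀ p q, max (α p) (β q) ≤ w (k - 1) := fun p q => (hcond p q).2.2
  have p0 : Fin (t (k - 1)) := ⟨0, by omega⟩
  by_cases hcase : ∀ p, α p ≤ v (k - 1)
  · exact auxMem Λ (v k) (w k) (t k) hvk_wk htk (t (k - 1)) htkle α β hα hβ hlp
      (fun p => le_trans (hcase p) hv)
      (countBound β hβ (fun q => le_trans (le_max_right _ _) (hmax p0 q)) hwt)
  · push_neg at hcase
    obtain ⟨pb, hpb⟩ := hcase
    have hball : ∀ q, β q ≤ v (k - 1) := fun q => by have := hmin pb q; omega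
    have hsym : ∀ i j, ladderEntry K Λ i j = ladderEntry K Λ j i := by
      intro i j
      unfold ladderEntry
      rw [min_comm, max_comm]
    have key : Matrix.transpose (Matrix.of fun p q => ladderEntry K Λ (β p) (α q)) =
        Matrix.of fun p q => ladderEntry K Λ (α p) (β q) := by
      refine Matrix.ext fun p q => ?_
      exact hsym _ _
    rw [← key, Matrix.det_transpose]
    exact auxMem Λ (v k) (w k) (t k) hvk_wk htk (t (k - 1)) htkle β α hβ hα
      (fun p q => by rw [min_comm, max_comm]; exact hlp q p)
      (fun p => le_trans (hball p) hv)
      (countBound α hα (fun q => le_trans (le_max_left _ _) (hmax q p0)) hwt)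
end
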